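/- arXiv:2306.16881 — 4 statements merged into one kernel-verified Lean document; each statement's English description precedes it below -/
import Mathlib

section
/- Let A ⊆ Ag with |Ag| = k, and let L be the logic with L(α) = {D} for α ∈ A and L(α) = ∅ otherwise. Then a closed formula φ is L-satisfiable if and only if φ ∧ Inv(⋀_{α∈A} ⟨α⟩tt) is K_k^μ-satisfiable. -/
/-- Formulas of the multi-agent modal μ-calculus. -/
inductive Formula (Ag PVar LVar : Type) : Type
  | prop  : PVar → Formula Ag PVar LVar
  | nprop : PVar → Formula Ag PVar LVar
  | tt    : Formula Ag PVar LVar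
  | ff    : Formula Ag PVar LVar
  | var   : LVar → Formula Ag PVar LVar
  | and   : Formula Ag PVar LVar → Formula Ag PVar LVar → Formula Ag PVar LVar
  | or    : Formula Ag PVar LVar → Formula Ag PVar LVar → Formula Ag PVar LVar
  | dia   : Ag → Formula Ag PVar LVar → Formula Ag PVar LVar
  | box   : Ag → Formula Ag PVar LVar → Formula Ag PVar LVar
  | mu    : LVar → Formula Ag PVar LVar → Formula Ag PVar LVar
  | nu    : LVar → Formula Ag PVar LVar → Formula Ag PVar LVar
  deriving DecidableEq

/-- A Kripke model: a nonempty set of states, an accessibility relation per agent,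
and a propositional valuation. -/
structure KModel (Ag PVar : Type) where
  W : Type
  h_ne : Nonempty W
  R : Ag → W → W → Prop
  V : W → Set PVar

variable {Ag PVar LVar : Type}

/-- The μ-calculus semantics of a formula relative to an environment. -/
def Formula.sem [DecidableEq LVar] (M : KModel Ag PVar) :
    Formula Ag PVar LVar → (LVar → Set M.W) → Set M.W
  | .prop p, _ => {s | p ∈ M.V s}
  | .nprop p, _ => {s | p ∉ M.V s}
  | .tt, _ => Set.univ
  | .ff, _ => ∅
  | .var X, ρ => ρ X
  | .and φ ψ, ρ => Formula.sem M φ ρ ∩ Formula.sem M ψ ρ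
  | .or φ ψ, ρ => Formula.sem M φ ρ ∪ Formula.sem M ψ ρ
  | .box a φ, ρ => {s | ∀ t, M.R a s t → t ∈ Formula.sem M φ ρ}
  | .dia a φ, ρ => {s | ∃ t, M.R a s t ∧ t ∈ Formula.sem M φ ρ}
  | .mu X φ, ρ => ⋂₀ {S | Formula.sem M φ (Function.update ρ X S) ⊆ S}
  | .nu X φ, ρ => ⋃₀ {S | S ⊆ Formula.sem M φ (Function.update ρ X S)}

/-- Free recursion variables of a formula. -/
def Formula.freeVars : Formula Ag PVar LVar → Set LVar
  | .var X => {X}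
  | .and φ ψ => Formula.freeVars φ ∪ Formula.freeVars ψ
  | .or φ ψ => Formula.freeVars φ ∪ Formula.freeVars ψ
  | .dia _ φ => Formula.freeVars φ
  | .box _ φ => Formula.freeVars φ
  | .mu X φ => Formula.freeVars φ \ {X}
  | .nu X φ => Formula.freeVars φ \ {X}
  | _ => ∅

/-- A formula is closed when it has no free recursion variables. -/
def Formula.Closed (φ : Formula Ag PVar LVar) : Prop := φ.freeVars = ∅

/-- Frame conditions D (serial), T (reflexive), B (symmetric), 4 (transitive), 5 (euclidean). -/
inductive FrameCond : Type
  | D | T | B | four | five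
  deriving DecidableEq

/-- A binary relation `R` satisfies a frame condition. -/
def SatisfiesCond {W : Type} (R : W → W → Prop) : FrameCond → Prop
  | .D => ∀ s, ∃ t, R s t
  | .T => ∀ s, R s s
  | .B => ∀ s t, R s t → R t s
  | .four => ∀ s t u, R s t → R t u → R s u
  | .five => ∀ s t u, R s t → R s u → R t u

/-- A logic assigns a set of frame conditions to each agent;
a model is an L-model when each agent's relation satisfies the agent's conditions. -/
def IsLModel (L : Ag → Set FrameCond) (M : KModel Ag PVar) : Prop :=
  ∀ a : Ag, ∀ c ∈ L a, SatisfiesCond (M.R a) c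

/-- A formula is L-satisfiable when it holds at some state of some L-model. -/
def LSatisfiable [DecidableEq LVar] (L : Ag → Set FrameCond)
    (φ : Formula Ag PVar LVar) : Prop :=
  ∃ (M : KModel Ag PVar), IsLModel L M ∧
    ∃ (w : M.W) (ρ : LVar → Set M.W), w ∈ Formula.sem M φ ρ

/-- Finite conjunction of a list of formulas (empty conjunction is tt). -/
def bigAnd : List (Formula Ag PVar LVar) → Formula Ag PVar LVar
  | [] => .tt
  | φ :: l => .and φ (bigAnd l)

/-- Syntactic negation, defined by the usual dualities. -/
def Formula.neg : Formula Ag PVar LVar → Formula Ag PVar LVar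
  | .prop p => .nprop p
  | .nprop p => .prop p
  | .tt => .ff
  | .ff => .tt
  | .var X => .var X
  | .and φ ψ => .or (Formula.neg φ) (Formula.neg ψ)
  | .or φ ψ => .and (Formula.neg φ) (Formula.neg ψ)
  | .dia a φ => .box a (Formula.neg φ)
  | .box a φ => .dia a (Formula.neg φ)
  | .mu X φ => .nu X (Formula.neg φ)
  | .nu X φ => .mu X (Formula.neg φ)

/-- Implication φ → ψ, encoded as ¬φ ∨ ψ. -/
def Formula.impl (φ ψ : Formula Ag PVar LVar) : Formula Ag PVar LVar := .or φ.neg ψ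

/-- All variables (free or bound) occurring in a formula. -/
def Formula.vars : Formula Ag PVar LVar → Set LVar
  | .var X => {X}
  | .and φ ψ => Formula.vars φ ∪ Formula.vars ψ
  | .or φ ψ => Formula.vars φ ∪ Formula.vars ψ
  | .dia _ φ => Formula.vars φ
  | .box _ φ => Formula.vars φ
  | .mu X φ => insert X (Formula.vars φ)
  | .nu X φ => insert X (Formula.vars φ)
  | _ => ∅

/-- [Ag]φ = ⋀_{α ∈ Ag} [α]φ. -/
noncomputable def boxAg [Fintype Ag] (φ : Formula Ag PVar LVar) : Formula Ag PVar LVar :=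
  bigAnd ((Finset.univ : Finset Ag).toList.map (fun a => Formula.box a φ))

/-- Inv(φ) = νX.(φ ∧ [Ag]X), for the given (fresh) variable X. -/
noncomputable def InvF [Fintype Ag] (X : LVar) (φ : Formula Ag PVar LVar) :
    Formula Ag PVar LVar :=
  .nu X (.and φ (boxAg (.var X)))

section Aux

variable [DecidableEq LVar]

lemma sem_bigAnd (M : KModel Ag PVar) (l : List (Formula Ag PVar LVar))
    (ρ : LVar → Set M.W) (s : M.W) :
    s ∈ Formula.sem M (bigAnd l) ρ ↔ ∀ f ∈ l, s ∈ Formula.sem M f ρ := by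
  induction l with
  | nil => simp [bigAnd, Formula.sem]
  | cons f l ih => simp [bigAnd, Formula.sem, ih]

/-- The generated submodel on a set `S` closed under all relations. -/
@[reducible] def subModel (M : KModel Ag PVar) (S : Set M.W) (hne : Nonempty S) : KModel Ag PVar :=
  ⟨S, hne, fun a s t => M.R a ↑s ↑t, fun s => M.V ↑s⟩

lemma update_preimage {M : KModel Ag PVar} {S : Set M.W}
    (ρ : LVar → Set M.W) (X : LVar) (T : Set M.W) :
    (fun Y => (Subtype.val : S → M.W) ⁻¹' (Function.update ρ X T Y)) =
      Function.update (fun Y => (Subtype.val : S → M.W) ⁻¹' ρ Y) X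
        ((Subtype.val : S → M.W) ⁻¹' T) := by
  funext Y
  by_cases h : Y = X <;> simp [Function.update, h]

/-- μ-calculus semantics is invariant under generated submodels. -/
lemma sem_subModel (M : KModel Ag PVar) (S : Set M.W) (hne : Nonempty S)
    (hcl : ∀ a : Ag, ∀ s t, s ∈ S → M.R a s t → t ∈ S)
    (φ : Formula Ag PVar LVar) (ρ : LVar → Set M.W) :
    Formula.sem (subModel M S hne) φ (fun Y => Subtype.val ⁻¹' ρ Y)
      = Subtype.val ⁻¹' Formula.sem M φ ρ := by
  induction φ generalizing ρ with
  | prop p => rfl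
  | nprop p => rfl
  | tt => simp [Formula.sem]
  | ff => simp [Formula.sem]
  | var Y => rfl
  | and φ ψ ihφ ihψ =>
      simp [Formula.sem, ihφ, ihψ, Set.preimage_inter]
  | or φ ψ ihφ ihψ =>
      simp [Formula.sem, ihφ, ihψ, Set.preimage_union]
  | box a φ ih =>
      ext s
      simp only [Formula.sem, Set.mem_preimage, Set.mem_setOf_eq, ih]
      constructor
      · intro h t hR
        exact h ⟨t, hcl a ↑s t s.2 hR⟩ hR
      · intro h t hR
        exact h ↑t hR
  | dia a φ ih =>
      ext s
      simp only [Formula.sem, Set.mem_preimage, Set.mem_setOf_eq, ih]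
      constructor
      · rintro ⟨t, hR, ht⟩
        exact ⟨↑t, hR, ht⟩
      · rintro ⟨t, hR, ht⟩
        exact ⟨⟨t, hcl a ↑s t s.2 hR⟩, hR, ht⟩
  | mu Y φ ih =>
      apply le_antisymm
      · intro s hs T hT
        -- hT : T is a prefixpoint in M; show val⁻¹' T is a prefixpoint downstairs
        have : Formula.sem (subModel M S hne) φ
            (Function.update (fun Z => Subtype.val ⁻¹' ρ Z) Y (Subtype.val ⁻¹' T))
            ⊆ Subtype.val ⁻¹' T := by
          rw [← update_preimage, ih]
          exact fun x hx => hT hx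
        exact hs _ this
      · intro s hs T' hT'
        -- hT' : T' is a prefixpoint downstairs
        set T : Set M.W := (Subtype.val '' T') ∪ Sᶜ with hTdef
        have hpre : (Subtype.val : S → M.W) ⁻¹' T = T' := by
          ext x
          simp only [hTdef, Set.mem_preimage, Set.mem_union, Set.mem_image,
            Set.mem_compl_iff]
          constructor
          · rintro (⟨y, hy, hyx⟩ | h)
            · rwa [← Subtype.val_injective hyx]
            · exact absurd x.2 h
          · intro hx
            exact Or.inl ⟨x, hx, rfl⟩
        have hTfix : Formula.sem M φ (Function.update ρ Y T) ⊆ T := by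
          intro w hw
          by_cases hwS : w ∈ S
          · have : (⟨w, hwS⟩ : S) ∈ Subtype.val ⁻¹' Formula.sem M φ (Function.update ρ Y T) := hw
            rw [← ih] at this
            rw [update_preimage, hpre] at this
            exact Or.inl ⟨⟨w, hwS⟩, hT' this, rfl⟩
          · exact Or.inr hwS
        have := hs T hTfix
        rw [← hpre]
        exact this
  | nu Y φ ih =>
      apply le_antisymm
      · rintro s ⟨T', hT', hsT'⟩
        set T : Set M.W := Subtype.val '' T' with hTdef
        have hpre : (Subtype.val : S → M.W) ⁻¹' T = T' := by
          ext x
          simp only [hTdef, Set.mem_preimage, Set.mem_image]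
          constructor
          · rintro ⟨y, hy, hyx⟩
            rwa [← Subtype.val_injective hyx]
          · intro hx
            exact ⟨x, hx, rfl⟩
        refine ⟨T, ?_, ⟨s, hsT', rfl⟩⟩
        simp only [Set.mem_setOf_eq]
        intro w hw
        rcases hw with ⟨x, hx, rfl⟩
        have : x ∈ Formula.sem (subModel M S hne) φ
            (Function.update (fun Z => Subtype.val ⁻¹' ρ Z) Y (Subtype.val ⁻¹' T)) := by
          rw [hpre]
          exact hT' hx
        rw [← update_preimage, ih] at this
        exact this
      · rintro s ⟨T, hT, hsT⟩
        refine ⟨Subtype.val ⁻¹' T, ?_, hsT⟩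
        simp only [Set.mem_setOf_eq]
        rw [← update_preimage, ih]
        exact fun x hx => hT hx

end Aux

/-- φ is L-satisfiable (L giving condition D exactly to the agents in A)
iff φ ∧ Inv(⋀_{α∈A}⟨α⟩tt) is satisfiable over arbitrary frames (K_k^μ). -/
theorem seriality_translation_correct [Fintype Ag] [Nonempty Ag] [DecidableEq LVar]
    (A : Finset Ag) (L : Ag → Set FrameCond)
    (hLA : ∀ a ∈ A, L a = {FrameCond.D})
    (hLA' : ∀ a ∉ A, L a = (∅ : Set FrameCond))
    (φ : Formula Ag PVar LVar) (hc : φ.Closed)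
    (X : LVar) (hX : X ∉ φ.vars) :
    LSatisfiable L φ ↔
      LSatisfiable (fun _ => (∅ : Set FrameCond))
        (.and φ (InvF X (bigAnd (A.toList.map (fun a => Formula.dia a Formula.tt))))) := by
  set ψ : Formula Ag PVar LVar := bigAnd (A.toList.map (fun a => Formula.dia a Formula.tt))
    with hψ
  constructor
  · rintro ⟨M, hM, w, ρ, hw⟩
    refine ⟨M, fun a c hc => absurd hc (by simp), w, ρ, ?_⟩
    refine ⟨hw, ?_⟩
    refine ⟨Set.univ, ?_, Set.mem_univ w⟩
    intro s _
    constructor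
    · rw [sem_bigAnd]
      rintro f hf
      simp only [List.mem_map] at hf
      obtain ⟨a, ha, rfl⟩ := hf
      have haA : a ∈ A := by simpa using ha
      have hser : SatisfiesCond (M.R a) FrameCond.D := by
        apply hM a
        rw [hLA a haA]; rfl
      obtain ⟨t, ht⟩ := hser s
      exact ⟨t, ht, Set.mem_univ t⟩
    · rw [boxAg, sem_bigAnd]
      rintro f hf
      simp only [List.mem_map] at hf
      obtain ⟨a, _, rfl⟩ := hf
      intro t _
      simp [Formula.sem, Function.update]
  · rintro ⟨M, _, w, ρ, hw, hInv⟩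
    obtain ⟨S0, hS0, hwS0⟩ := hInv
    have hcl : ∀ a : Ag, ∀ s t, s ∈ S0 → M.R a s t → t ∈ S0 := by
      intro a s t hs hR
      have h2 := (hS0 hs).2
      rw [boxAg, sem_bigAnd] at h2
      have := h2 (Formula.box a (Formula.var X))
        (by simp only [List.mem_map]; exact ⟨a, by simp, rfl⟩)
      have := this t hR
      simpa [Formula.sem, Function.update] using this
    have hser : ∀ a ∈ A, ∀ s ∈ S0, ∃ t ∈ S0, M.R a s t := by
      intro a ha s hs
      have h1 := (hS0 hs).1
      rw [sem_bigAnd] at h1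
      have := h1 (Formula.dia a Formula.tt)
        (by simp only [List.mem_map]; exact ⟨a, by simpa using ha, rfl⟩)
      obtain ⟨t, hR, -⟩ := this
      exact ⟨t, hcl a s t hs hR, hR⟩
    have hne : Nonempty S0 := ⟨⟨w, hwS0⟩⟩
    refine ⟨subModel M S0 hne, ?_, ⟨w, hwS0⟩, fun Y => Subtype.val ⁻¹' ρ Y, ?_⟩
    · intro a c hc
      by_cases haA : a ∈ A
      · rw [hLA a haA] at hc
        rcases hc with rfl
        intro s
        obtain ⟨t, htS0, hR⟩ := hser a haA ↑s s.2
        exact ⟨⟨t, htS0⟩, hR⟩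
      · rw [hLA' a haA] at hc
        exact absurd hc (Set.notMem_empty c)
    · rw [sem_subModel M S0 hne hcl]
      exact hw
end

section
/- Let A ⊆ Ag and let L1, L2 be logics such that L1(α) = L2(α) + T for α ∈ A and L1(α) = L2(α) otherwise, where each L2(α) includes at most the frame conditions D and B. Let t^T_A be the translation defined homomorphically on all formula constructors except, for α ∈ A: t^T_A([α]φ) = [α]t^T_A(φ) ∧ t^T_A(φ) and t^T_A(⟨α⟩φ) = ⟨α⟩t^T_A(φ) ∨ t^T_A(φ). Then a closed formula φ is L1-satisfiable if and only if t^T_A(φ) is L2-satisfiable. -/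
variable {Ag PVar LVar : Type}

/-- The reflexivity translation t^T_A: homomorphic except on modalities of agents in A. -/
def tT [DecidableEq Ag] (A : Finset Ag) : Formula Ag PVar LVar → Formula Ag PVar LVar
  | .box a φ =>
      if a ∈ A then .and (.box a (tT A φ)) (tT A φ) else .box a (tT A φ)
  | .dia a φ =>
      if a ∈ A then .or (.dia a (tT A φ)) (tT A φ) else .dia a (tT A φ)
  | .and φ ψ => .and (tT A φ) (tT A ψ)
  | .or φ ψ => .or (tT A φ) (tT A ψ)
  | .mu X φ => .mu X (tT A φ)
  | .nu X φ => .nu X (tT A φ)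
  | φ => φ


lemma tT_sem_refl [DecidableEq Ag] [DecidableEq LVar] (A : Finset Ag)
    (M : KModel Ag PVar) (hrefl : ∀ a ∈ A, ∀ s, M.R a s s) :
    ∀ (φ : Formula Ag PVar LVar) (ρ : LVar → Set M.W),
      Formula.sem M (tT A φ) ρ = Formula.sem M φ ρ := by
  intro φ
  induction φ with
  | box a φ ih =>
    intro ρ
    by_cases h : a ∈ A
    · simp only [tT, if_pos h, Formula.sem, ih]
      ext s
      simp only [Set.mem_inter_iff, Set.mem_setOf_eq]
      exact ⟨fun h1 => h1.1, fun h1 => ⟨h1, h1 s (hrefl a h s)⟩⟩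
    · simp only [tT, if_neg h, Formula.sem, ih]
  | dia a φ ih =>
    intro ρ
    by_cases h : a ∈ A
    · simp only [tT, if_pos h, Formula.sem, ih]
      ext s
      simp only [Set.mem_union, Set.mem_setOf_eq]
      constructor
      · rintro (⟨t, ht, hm⟩ | hm)
        · exact ⟨t, ht, hm⟩
        · exact ⟨s, hrefl a h s, hm⟩
      · exact Or.inl
    · simp only [tT, if_neg h, Formula.sem, ih]
  | and φ ψ ih1 ih2 => intro ρ; simp only [tT, Formula.sem, ih1, ih2]
  | or φ ψ ih1 ih2 => intro ρ; simp only [tT, Formula.sem, ih1, ih2]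
  | mu X φ ih => intro ρ; simp only [tT, Formula.sem, ih]
  | nu X φ ih => intro ρ; simp only [tT, Formula.sem, ih]
  | prop p => intro ρ; rfl
  | nprop p => intro ρ; rfl
  | tt => intro ρ; rfl
  | ff => intro ρ; rfl
  | var X => intro ρ; rfl

/-- The model obtained by adding reflexive loops for agents in `A`. -/
def addRefl [DecidableEq Ag] (A : Finset Ag) (M : KModel Ag PVar) : KModel Ag PVar :=
  ⟨M.W, M.h_ne, fun a s t => M.R a s t ∨ (a ∈ A ∧ s = t), M.V⟩

lemma tT_sem_addRefl [DecidableEq Ag] [DecidableEq LVar] (A : Finset Ag)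
    (M : KModel Ag PVar) :
    ∀ (φ : Formula Ag PVar LVar) (ρ : LVar → Set M.W),
      Formula.sem (addRefl A M) φ ρ = Formula.sem M (tT A φ) ρ := by
  intro φ
  induction φ with
  | box a φ ih =>
    intro ρ
    by_cases h : a ∈ A
    · simp only [tT, if_pos h, Formula.sem, ih]; simp only [addRefl]
      ext s
      simp only [Set.mem_inter_iff, Set.mem_setOf_eq]
      constructor
      · intro h1
        exact ⟨fun t ht => h1 t (Or.inl ht), h1 s (Or.inr ⟨h, rfl⟩)⟩
      · rintro ⟨h1, h2⟩ t (ht | ⟨_, rfl⟩)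
        · exact h1 t ht
        · exact h2
    · simp only [tT, if_neg h, Formula.sem, ih]; simp only [addRefl]
      ext s
      simp only [Set.mem_setOf_eq]
      constructor
      · intro h1 t ht; exact h1 t (Or.inl ht)
      · rintro h1 t (ht | ⟨ha, rfl⟩)
        · exact h1 t ht
        · exact absurd ha h
  | dia a φ ih =>
    intro ρ
    by_cases h : a ∈ A
    · simp only [tT, if_pos h, Formula.sem, ih]; simp only [addRefl]
      ext s
      simp only [Set.mem_union, Set.mem_setOf_eq]
      constructor
      · rintro ⟨t, (ht | ⟨_, rfl⟩), hm⟩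
        · exact Or.inl ⟨t, ht, hm⟩
        · exact Or.inr hm
      · rintro (⟨t, ht, hm⟩ | hm)
        · exact ⟨t, Or.inl ht, hm⟩
        · exact ⟨s, Or.inr ⟨h, rfl⟩, hm⟩
    · simp only [tT, if_neg h, Formula.sem, ih]; simp only [addRefl]
      ext s
      simp only [Set.mem_setOf_eq]
      constructor
      · rintro ⟨t, (ht | ⟨ha, rfl⟩), hm⟩
        · exact ⟨t, ht, hm⟩
        · exact absurd ha h
      · rintro ⟨t, ht, hm⟩; exact ⟨t, Or.inl ht, hm⟩
  | and φ ψ ih1 ih2 => intro ρ; simp only [tT, Formula.sem, ih1, ih2]; rfl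
  | or φ ψ ih1 ih2 => intro ρ; simp only [tT, Formula.sem, ih1, ih2]; rfl
  | mu X φ ih => intro ρ; simp only [tT, Formula.sem, ih]; exact congrArg Set.sInter (Set.ext fun S => Iff.of_eq (congrArg (· ⊆ S) (ih (Function.update ρ X S))))
  | nu X φ ih => intro ρ; simp only [tT, Formula.sem, ih]; exact congrArg Set.sUnion (Set.ext fun S => Iff.of_eq (congrArg (S ⊆ ·) (ih (Function.update ρ X S))))
  | prop p => intro ρ; rfl
  | nprop p => intro ρ; rfl
  | tt => intro ρ; rfl
  | ff => intro ρ; rfl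
  | var X => intro ρ; rfl

/-- correctness of the reflexivity translation. -/
theorem reflexivity_translation_correct [DecidableEq Ag] [DecidableEq LVar]
    (A : Finset Ag) (L1 L2 : Ag → Set FrameCond)
    (hA : ∀ a ∈ A, L1 a = L2 a ∪ {FrameCond.T})
    (hA' : ∀ a ∉ A, L1 a = L2 a)
    (hL2 : ∀ a : Ag, L2 a ⊆ {FrameCond.D, FrameCond.B})
    (φ : Formula Ag PVar LVar) (hc : φ.Closed) :
    LSatisfiable L1 φ ↔ LSatisfiable L2 (tT A φ) := by
  constructor
  · rintro ⟨M, hM, w, ρ, hw⟩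
    refine ⟨M, ?_, w, ρ, ?_⟩
    · intro a c hc
      by_cases h : a ∈ A
      · exact hM a c (by rw [hA a h]; exact Or.inl hc)
      · exact hM a c (by rwa [hA' a h])
    · rw [tT_sem_refl A M ?_ φ ρ]
      · exact hw
      · intro a ha s
        exact hM a .T (by rw [hA a ha]; exact Or.inr rfl) s
  · rintro ⟨M, hM, w, ρ, hw⟩
    refine ⟨addRefl A M, ?_, w, ρ, ?_⟩
    · intro a c hc
      by_cases h : a ∈ A
      · rw [hA a h] at hc
        rcases hc with hc | hc
        · rcases hL2 a hc with rfl | rfl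
          · intro s
            obtain ⟨t, ht⟩ := hM a .D hc s
            exact ⟨t, Or.inl ht⟩
          · rintro s t (hst | ⟨ha, rfl⟩)
            · exact Or.inl (hM a .B hc s t hst)
            · exact Or.inr ⟨ha, rfl⟩
        · simp only [Set.mem_singleton_iff] at hc
          subst hc
          intro s
          exact Or.inr ⟨h, rfl⟩
      · rw [hA' a h] at hc
        rcases hL2 a hc with rfl | rfl
        · intro s
          obtain ⟨t, ht⟩ := hM a .D hc s
          exact ⟨t, Or.inl ht⟩
        · rintro s t (hst | ⟨ha, rfl⟩)
          · exact Or.inl (hM a .B hc s t hst)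
          · exact Or.inr ⟨ha, rfl⟩
    · rw [tT_sem_addRefl A M φ ρ]
      exact hw
end

section
/- Let L be a logic and M an L-model with state w. Then the pointed model obtained from the tree unfolding (M', w) of (M, w) by replacing each relation R'_α with its closure under the frame conditions in L(α) (applied in the order D, T, B, 4, 5) is bisimilar to (M, w). -/
variable {Ag PVar : Type}

/-- `S` is a bisimulation between two Kripke models. -/
def IsBisim (M1 M2 : KModel Ag PVar) (S : M1.W → M2.W → Prop) : Prop :=
  ∀ s1 s2, S s1 s2 →
    (∀ (a : Ag) (s1' : M1.W), M1.R a s1 s1' → ∃ s2', M2.R a s2 s2' ∧ S s1' s2') ∧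
    (∀ (a : Ag) (s2' : M2.W), M2.R a s2 s2' → ∃ s1', M1.R a s1 s1' ∧ S s1' s2') ∧
    M1.V s1 = M2.V s2

/-- Two pointed models are bisimilar when some bisimulation relates their points. -/
def Bisimilar (M1 : KModel Ag PVar) (s1 : M1.W) (M2 : KModel Ag PVar) (s2 : M2.W) : Prop :=
  ∃ S : M1.W → M2.W → Prop, IsBisim M1 M2 S ∧ S s1 s2

/-- The final state of the path w0 α1 w1 ⋯ αn wn. -/
def lastState (M : KModel Ag PVar) : M.W → List (Ag × M.W) → M.W
  | w, [] => w
  | _, (_, v) :: l => lastState M v l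

/-- Validity of a path: w0 α1 w1 ⋯ αn wn with wi R_{α_{i+1}} w_{i+1} throughout. -/
def ValidPath (M : KModel Ag PVar) : M.W → List (Ag × M.W) → Prop
  | _, [] => True
  | w, (a, v) :: l => M.R a w v ∧ ValidPath M v l

/-- The tree unfolding of the pointed model (M, w0): states are the finite
R-paths from w0, a path is α-related to its one-step α-extensions, and a path
is valuated by its final state. -/
def unfolding (M : KModel Ag PVar) (w0 : M.W) : KModel Ag PVar where
  W := { l : List (Ag × M.W) // ValidPath M w0 l }
  h_ne := ⟨⟨[], trivial⟩⟩
  R := fun a u v => ∃ w : M.W, v.1 = u.1 ++ [(a, w)]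
  V := fun u => M.V (lastState M w0 u.1)

/-- The root of the tree unfolding: the empty path. -/
def unfoldRoot (M : KModel Ag PVar) (w0 : M.W) : (unfolding M w0).W :=
  ⟨[], trivial⟩
/-- The least euclidean relation containing `R`. -/
inductive EuclClosure {W : Type} (R : W → W → Prop) : W → W → Prop
  | base {s t : W} : R s t → EuclClosure R s t
  | eucl {s t u : W} : EuclClosure R s t → EuclClosure R s u → EuclClosure R t u

/-- The closure of a relation under a single frame condition. -/
def closureUnder {W : Type} : FrameCond → (W → W → Prop) → (W → W → Prop)
  | .D, R => fun s t => R s t ∨ (s = t ∧ ∀ u, ¬ R s u)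
  | .T, R => fun s t => R s t ∨ s = t
  | .B, R => fun s t => R s t ∨ R t s
  | .four, R => Relation.TransGen R
  | .five, R => EuclClosure R

open Classical in
/-- The closure of a relation under a set of frame conditions, applied in the
order D, T, B, 4, 5. -/
noncomputable def logicClosure {W : Type} (C : Set FrameCond) (R : W → W → Prop) :
    W → W → Prop :=
  let R1 := if FrameCond.D ∈ C then closureUnder FrameCond.D R else R
  let R2 := if FrameCond.T ∈ C then closureUnder FrameCond.T R1 else R1
  let R3 := if FrameCond.B ∈ C then closureUnder FrameCond.B R2 else R2
  let R4 := if FrameCond.four ∈ C then closureUnder FrameCond.four R3 else R3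
  if FrameCond.five ∈ C then closureUnder FrameCond.five R4 else R4

/-- The tree unfolding with each agent's relation replaced by its closure
under the frame conditions of L for that agent. -/
noncomputable def closedUnfolding (L : Ag → Set FrameCond) (M : KModel Ag PVar)
    (w0 : M.W) : KModel Ag PVar where
  W := (unfolding M w0).W
  h_ne := (unfolding M w0).h_ne
  R := fun a => logicClosure (L a) ((unfolding M w0).R a)
  V := (unfolding M w0).V

/-- The root of the closed unfolding: the empty path. -/
noncomputable def closedUnfoldRoot (L : Ag → Set FrameCond) (M : KModel Ag PVar)
    (w0 : M.W) : (closedUnfolding L M w0).W :=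
  ⟨[], trivial⟩

lemma lastState_append (M : KModel Ag PVar) (w v : M.W) (a : Ag) (l : List (Ag × M.W)) :
    lastState M w (l ++ [(a, v)]) = v := by
  induction l generalizing w with
  | nil => rfl
  | cons h t ih => exact ih h.2

lemma validPath_append (M : KModel Ag PVar) {w v : M.W} {a : Ag} {l : List (Ag × M.W)}
    (hl : ValidPath M w l) (hr : M.R a (lastState M w l) v) :
    ValidPath M w (l ++ [(a, v)]) := by
  induction l generalizing w with
  | nil => exact ⟨hr, trivial⟩
  | cons h t ih => exact ⟨hl.1, ih hl.2 hr⟩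

lemma validPath_append_rel (M : KModel Ag PVar) {w v : M.W} {a : Ag} {l : List (Ag × M.W)}
    (h : ValidPath M w (l ++ [(a, v)])) : M.R a (lastState M w l) v := by
  induction l generalizing w with
  | nil => exact h.1
  | cons hd t ih => exact ih h.2

lemma logicClosure_sub {W : Type} {C : Set FrameCond} {R Q : W → W → Prop}
    (hRQ : ∀ u v, R u v → Q u v)
    (hser : FrameCond.D ∈ C → ∀ u, ∃ v, R u v)
    (hT : FrameCond.T ∈ C → ∀ s, Q s s)
    (hB : FrameCond.B ∈ C → ∀ s t, Q s t → Q t s)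
    (h4 : FrameCond.four ∈ C → ∀ s t u, Q s t → Q t u → Q s u)
    (h5 : FrameCond.five ∈ C → ∀ s t u, Q s t → Q s u → Q t u) :
    ∀ u v, logicClosure C R u v → Q u v := by
  classical
  have g1 : ∀ u v, (if FrameCond.D ∈ C then closureUnder FrameCond.D R else R) u v → Q u v := by
    split_ifs with hD
    · rintro u v (h | ⟨rfl, hno⟩)
      · exact hRQ _ _ h
      · obtain ⟨v', hv'⟩ := hser hD u
        exact absurd hv' (hno v')
    · exact hRQ
  set R1 := (if FrameCond.D ∈ C then closureUnder FrameCond.D R else R) with hR1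
  have g2 : ∀ u v, (if FrameCond.T ∈ C then closureUnder FrameCond.T R1 else R1) u v → Q u v := by
    split_ifs with hTc
    · rintro u v (h | rfl)
      · exact g1 _ _ h
      · exact hT hTc u
    · exact g1
  set R2 := (if FrameCond.T ∈ C then closureUnder FrameCond.T R1 else R1) with hR2
  have g3 : ∀ u v, (if FrameCond.B ∈ C then closureUnder FrameCond.B R2 else R2) u v → Q u v := by
    split_ifs with hBc
    · rintro u v (h | h)
      · exact g2 _ _ h
      · exact hB hBc _ _ (g2 _ _ h)
    · exact g2
  set R3 := (if FrameCond.B ∈ C then closureUnder FrameCond.B R2 else R2) with hR3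
  have g4 : ∀ u v, (if FrameCond.four ∈ C then closureUnder FrameCond.four R3 else R3) u v →
      Q u v := by
    split_ifs with h4c
    · intro u v h
      induction h with
      | single h => exact g3 _ _ h
      | tail _ h' ih => exact h4 h4c _ _ _ ih (g3 _ _ h')
    · exact g3
  set R4 := (if FrameCond.four ∈ C then closureUnder FrameCond.four R3 else R3) with hR4
  have g5 : ∀ u v, (if FrameCond.five ∈ C then closureUnder FrameCond.five R4 else R4) u v →
      Q u v := by
    split_ifs with h5c
    · intro u v h
      induction h with
      | base h => exact g4 _ _ h
      | eucl _ _ ih1 ih2 => exact h5 h5c _ _ _ ih1 ih2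
    · exact g4
  intro u v h
  exact g5 u v h

lemma sub_logicClosure {W : Type} (C : Set FrameCond) (R : W → W → Prop) {u v : W}
    (h : R u v) : logicClosure C R u v := by
  classical
  have h1 : (if FrameCond.D ∈ C then closureUnder FrameCond.D R else R) u v := by
    split_ifs
    · exact Or.inl h
    · exact h
  set R1 := (if FrameCond.D ∈ C then closureUnder FrameCond.D R else R)
  have h2 : (if FrameCond.T ∈ C then closureUnder FrameCond.T R1 else R1) u v := by
    split_ifs
    · exact Or.inl h1
    · exact h1
  set R2 := (if FrameCond.T ∈ C then closureUnder FrameCond.T R1 else R1)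
  have h3 : (if FrameCond.B ∈ C then closureUnder FrameCond.B R2 else R2) u v := by
    split_ifs
    · exact Or.inl h2
    · exact h2
  set R3 := (if FrameCond.B ∈ C then closureUnder FrameCond.B R2 else R2)
  have h4 : (if FrameCond.four ∈ C then closureUnder FrameCond.four R3 else R3) u v := by
    split_ifs
    · exact Relation.TransGen.single h3
    · exact h3
  set R4 := (if FrameCond.four ∈ C then closureUnder FrameCond.four R3 else R3)
  have h5 : (if FrameCond.five ∈ C then closureUnder FrameCond.five R4 else R4) u v := by
    split_ifs
    · exact EuclClosure.base h4
    · exact h4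
  exact h5

/-- for an L-model M, the L-closure of the tree unfolding of
(M, w) is bisimilar to (M, w). -/
theorem closed_unfolding_bisimilar (L : Ag → Set FrameCond) (M : KModel Ag PVar)
    (hM : IsLModel L M) (w : M.W) :
    Bisimilar (closedUnfolding L M w) (closedUnfoldRoot L M w) M w := by
  classical
  refine ⟨fun u s => lastState M w u.1 = s, ?_, rfl⟩
  intro u s hus
  subst hus
  have hbase : ∀ (a : Ag) (u v : (unfolding M w).W), (unfolding M w).R a u v →
      M.R a (lastState M w u.1) (lastState M w v.1) := by
    rintro a u v ⟨w', hw'⟩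
    have hv2 : ValidPath M w (u.1 ++ [(a, w')]) := hw' ▸ v.2
    have := validPath_append_rel M hv2
    rw [hw', lastState_append]
    exact this
  have hser : ∀ a : Ag, FrameCond.D ∈ L a →
      ∀ u : (unfolding M w).W, ∃ v, (unfolding M w).R a u v := by
    intro a hD u
    obtain ⟨t, ht⟩ := hM a FrameCond.D hD (lastState M w u.1)
    exact ⟨⟨u.1 ++ [(a, t)], validPath_append M u.2 ht⟩, t, rfl⟩
  refine ⟨?_, ?_, rfl⟩
  · intro a v hv
    refine ⟨lastState M w v.1, ?_, rfl⟩
    have := logicClosure_sub (C := L a) (R := (unfolding M w).R a)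
      (Q := fun u v => M.R a (lastState M w u.1) (lastState M w v.1))
      (hbase a) (hser a)
      (fun hT s' => hM a FrameCond.T hT _)
      (fun hB s' t' h => hM a FrameCond.B hB _ _ h)
      (fun h4 s' t' u' h h' => hM a FrameCond.four h4 _ _ _ h h')
      (fun h5 s' t' u' h h' => hM a FrameCond.five h5 _ _ _ h h')
      u v hv
    exact this
  · intro a s' hs'
    refine ⟨⟨u.1 ++ [(a, s')], validPath_append M u.2 hs'⟩,
      sub_logicClosure _ _ ⟨s', rfl⟩, lastState_append M w s' a u.1⟩
end

section
/- For every set W and every euclidean binary relation R on W, the transitive closure of R is euclidean. -/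
/-- A relation is euclidean when s R t and s R r imply t R r. -/
def Euclidean {W : Type} (R : W → W → Prop) : Prop :=
  ∀ s t r : W, R s t → R s r → R t r

lemma euclidean_aux {W : Type} {R : W → W → Prop} (h : Euclidean R)
    {s t r : W} (hst : R s t) (hsr : Relation.TransGen R s r) : R t r := by
  induction hsr with
  | single hr => exact h s t _ hst hr
  | tail hsr' hr ih =>
    have htt : R t t := h s t t hst hst
    have hbt : R _ t := h t _ t ih htt
    exact h _ t _ hbt hr

/-- the transitive closure of a euclidean relation is euclidean. -/
theorem transClosure_euclidean (W : Type) (R : W → W → Prop) (h : Euclidean R) :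
    Euclidean (Relation.TransGen R) := by
  intro s t r hst hsr
  induction hst with
  | single h1 => exact Relation.TransGen.single (euclidean_aux h h1 hsr)
  | tail _ h2 ih => exact Relation.TransGen.single (euclidean_aux h h2 ih)
end
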